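/- arXiv:2004.03263 — 2 statements merged into one kernel-verified Lean document; each statement's English description precedes it below -/
import Mathlib

section
/- Let $q$ be a prime power, $m \ge 1$, and $d$ an integer with $1 \le d \le q+1$. Then there exists a nonzero homogeneous polynomial $f \in \mathbb{F}_q[x_0, x_1, \dots, x_m]$ of degree $d$ whose number of zeros in $\mathbb{F}_q^{m+1} \setminus \{0\}$ is exactly $(q-1)\big(d\,q^{m-1} + p_{m-2}\big)$; thus the bound $d\,q^{m-1} + p_{m-2}$ on the number of projective zeros of a degree-$d$ hypersurface is attained. -/
open MvPolynomial Finset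

private lemma geom_nat' (q : ℕ) (hq : 1 ≤ q) (n : ℕ) :
    (q - 1) * ∑ i ∈ Finset.range n, q ^ i = q ^ n - 1 := by
  induction n with
  | zero => simp
  | succ n ih =>
    rw [Finset.sum_range_succ, Nat.mul_add, ih, Nat.sub_mul, one_mul, pow_succ']
    have h1 : 1 ≤ q ^ n := Nat.one_le_pow _ _ hq
    have h2 : q ^ n ≤ q * q ^ n := Nat.le_mul_of_pos_left _ hq
    omega

/-- The bound `d q^{m-1} + p_{m-2}` on the number of projective zeros of a
degree-`d` hypersurface in `ℙ^m(𝔽_q)` (for `1 ≤ d ≤ q + 1`) is attained: there is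
a nonzero homogeneous polynomial of degree `d` in `m + 1` variables over `𝔽_q`
with exactly `(q-1)(d q^{m-1} + p_{m-2})` zeros in `𝔽_q^{m+1} \ {0}`, where
`p_j = q^j + ⋯ + q + 1` for `j ≥ 0` and `p_j = 0` for `j < 0`. -/
theorem stmt_3 (F : Type*) [Field F] [Fintype F] (q m d : ℕ)
    (hq : Fintype.card F = q) (hm : 1 ≤ m)
    (hd1 : 1 ≤ d) (hd2 : d ≤ q + 1)
    (pm2 : ℕ) (hpm2 : pm2 = if m < 2 then 0 else ∑ i ∈ Finset.range (m - 1), q ^ i) :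
    ∃ f : MvPolynomial (Fin (m + 1)) F, f ≠ 0 ∧ f.IsHomogeneous d ∧
      Nat.card {x : Fin (m + 1) → F // x ≠ 0 ∧ eval x f = 0}
        = (q - 1) * (d * q ^ (m - 1) + pm2) := by
  classical
  obtain ⟨n, rfl⟩ : ∃ n, m = n + 1 := ⟨m - 1, (Nat.succ_pred_eq_of_pos hm).symm⟩
  have hq1 : 1 ≤ q := hq ▸ Fintype.card_pos
  have hq2 : 2 ≤ q := hq ▸ Fintype.one_lt_card
  -- simplify pm2
  have hpm2' : pm2 = ∑ i ∈ Finset.range n, q ^ i := by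
    rcases n with _ | n
    · simpa using hpm2
    · simpa using hpm2
  set t := min d q with ht_def
  have htq : t ≤ q := min_le_right _ _
  have htd : t ≤ d := min_le_left _ _
  have ht1 : 1 ≤ t := by omega
  obtain ⟨T, -, hT⟩ := Finset.exists_subset_card_eq
    (s := (Finset.univ : Finset F)) (n := t) (by rw [Finset.card_univ, hq]; exact htq)
  set k := d - t with hk_def
  have hkt : k + t = d := by omega
  have hk1 : k ≤ 1 := by omega
  have hTne : T.Nonempty := Finset.card_pos.mp (by omega)
  set f : MvPolynomial (Fin (n + 1 + 1)) F :=
    (X 1) ^ k * ∏ c ∈ T, (X 0 - C c * X 1) with hf_def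
  have heval : ∀ x : Fin (n + 1 + 1) → F,
      eval x f = (x 1) ^ k * ∏ c ∈ T, (x 0 - c * x 1) := by
    intro x
    simp [hf_def, eval_prod]
  refine ⟨f, ?_, ?_, ?_⟩
  · -- nonzero
    have h1 : (X 1 : MvPolynomial (Fin (n + 1 + 1)) F) ≠ 0 := X_ne_zero _
    have h2 : ∀ c ∈ T, (X 0 - C c * X 1 : MvPolynomial (Fin (n + 1 + 1)) F) ≠ 0 := by
      intro c _ h
      have := congrArg (eval (fun i : Fin (n + 1 + 1) => if i = 0 then (1 : F) else 0)) h
      simp at this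
    exact mul_ne_zero (pow_ne_zero _ h1) (Finset.prod_ne_zero_iff.mpr h2)
  · -- homogeneous
    have h1 : ((X 1 : MvPolynomial (Fin (n + 1 + 1)) F) ^ k).IsHomogeneous k := by
      have := (isHomogeneous_X F (1 : Fin (n + 1 + 1))).pow k
      rwa [one_mul] at this
    have h2 : (∏ c ∈ T, (X 0 - C c * X 1 : MvPolynomial (Fin (n + 1 + 1)) F)).IsHomogeneous t := by
      have := MvPolynomial.IsHomogeneous.prod T
        (fun c => (X 0 - C c * X 1 : MvPolynomial (Fin (n + 1 + 1)) F)) (fun _ => 1)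
        (fun c _ => by
          refine (isHomogeneous_X F (0 : Fin (n + 1 + 1))).sub ?_
          have := (isHomogeneous_C (Fin (n + 1 + 1)) (c : F)).mul
            (isHomogeneous_X F (1 : Fin (n + 1 + 1)))
          rwa [zero_add] at this)
      simpa [hT, Finset.sum_const, mul_one] using this
    have := h1.mul h2
    rwa [hkt] at this
  · -- the count
    set P : F → F → Prop := fun a b => b ^ k * ∏ c ∈ T, (a - c * b) = 0 with hP_def
    have hPiff : ∀ a b : F, P a b ↔ b ^ k * ∏ c ∈ T, (a - c * b) = 0 := fun _ _ => Iff.rfl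
    -- replace eval by P
    have e0 : {x : Fin (n + 1 + 1) → F // x ≠ 0 ∧ eval x f = 0}
        ≃ {x : Fin (n + 1 + 1) → F // x ≠ 0 ∧ P (x 0) (x 1)} :=
      Equiv.subtypeEquivRight (fun x => by rw [heval x])
    rw [Nat.card_congr e0, Nat.card_eq_fintype_card, Fintype.card_subtype]
    -- the zero vector satisfies P
    have hzero : P (0 : F) 0 := by
      rw [hPiff]
      simp only [mul_zero, sub_zero]
      rw [Finset.prod_const, zero_pow (by omega : T.card ≠ 0)]
      ring
    have herase : Finset.univ.filter
          (fun x : Fin (n + 1 + 1) → F => x ≠ 0 ∧ P (x 0) (x 1))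
        = (Finset.univ.filter (fun x : Fin (n + 1 + 1) → F => P (x 0) (x 1))).erase 0 := by
      ext x
      simp [Finset.mem_erase, and_comm]
    have hmem0 : (0 : Fin (n + 1 + 1) → F) ∈
        Finset.univ.filter (fun x : Fin (n + 1 + 1) → F => P (x 0) (x 1)) := by
      simpa using hzero
    rw [herase, Finset.card_erase_of_mem hmem0]
    -- count the full zero set via a product decomposition
    have hWcard : (Finset.univ.filter (fun x : Fin (n + 1 + 1) → F => P (x 0) (x 1))).card
        = (Fintype.card {ab : F × F // P ab.1 ab.2}) * q ^ n := by
      rw [← Fintype.card_subtype]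
      have E : {x : Fin (n + 1 + 1) → F // P (x 0) (x 1)}
          ≃ {ab : F × F // P ab.1 ab.2} × (Fin n → F) :=
        { toFun := fun x => (⟨(x.1 0, x.1 1), x.2⟩, fun i => x.1 i.succ.succ)
          invFun := fun y => ⟨Fin.cons y.1.1.1 (Fin.cons y.1.1.2 y.2), y.1.2⟩
          left_inv := fun x => by
            apply Subtype.ext
            funext i
            refine Fin.cases rfl (fun j => ?_) i
            refine Fin.cases rfl (fun i => ?_) j
            rfl
          right_inv := fun y => rfl }
      rw [Fintype.card_congr E, Fintype.card_prod, Fintype.card_fun, Fintype.card_fin, hq]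
    rw [hWcard]
    -- count pairs
    have E2 : {ab : F × F // P ab.1 ab.2} ≃ Σ b : F, {a : F // P a b} :=
      { toFun := fun x => ⟨x.1.2, x.1.1, x.2⟩
        invFun := fun y => ⟨(y.2.1, y.1), y.2.2⟩
        left_inv := fun x => rfl
        right_inv := fun y => rfl }
    have hfiber : ∀ b : F, Fintype.card {a : F // P a b}
        = if b = 0 then (if k = 0 then 1 else q) else t := by
      intro b
      by_cases hb : b = 0
      · subst hb
        rw [if_pos rfl]
        by_cases hk : k = 0
        · rw [if_pos hk]
          have : (Finset.univ.filter (fun a : F => P a 0)) = {0} := by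
            ext a
            simp only [Finset.mem_filter, Finset.mem_univ, true_and, Finset.mem_singleton,
              hPiff, mul_zero, sub_zero, Finset.prod_const, hT, hk, pow_zero, one_mul]
            rw [pow_eq_zero_iff (by clear * - ht1; omega : t ≠ 0)]
          rw [Fintype.card_subtype, this, Finset.card_singleton]
        · rw [if_neg hk]
          have : (Finset.univ.filter (fun a : F => P a 0)) = Finset.univ := by
            ext a
            simp only [Finset.mem_filter, Finset.mem_univ, true_and, hPiff]
            rw [zero_pow hk, zero_mul]
            simp
          rw [Fintype.card_subtype, this, Finset.card_univ, hq]
      · rw [if_neg hb]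
        have hbk : b ^ k ≠ 0 := pow_ne_zero _ hb
        have : (Finset.univ.filter (fun a : F => P a b)) = T.image (fun c => c * b) := by
          ext a
          simp only [Finset.mem_filter, Finset.mem_univ, true_and, Finset.mem_image, hPiff,
            mul_eq_zero, hbk, false_or, Finset.prod_eq_zero_iff, sub_eq_zero]
          constructor
          · rintro ⟨c, hc, rfl⟩; exact ⟨c, hc, rfl⟩
          · rintro ⟨c, hc, rfl⟩; exact ⟨c, hc, rfl⟩
        rw [Fintype.card_subtype, this,
          Finset.card_image_of_injective _ (mul_left_injective₀ hb), hT]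
    have hM : Fintype.card {ab : F × F // P ab.1 ab.2} = (q - 1) * d + 1 := by
      rw [Fintype.card_congr E2, Fintype.card_sigma]
      have : ∑ b : F, Fintype.card {a : F // P a b}
          = ∑ b : F, (if b = 0 then (if k = 0 then 1 else q) else t) :=
        Finset.sum_congr rfl (fun b _ => hfiber b)
      rw [this, ← Finset.add_sum_erase _ _ (Finset.mem_univ (0 : F)), if_pos rfl]
      have h2 : ∑ b ∈ Finset.univ.erase (0 : F),
          (if b = 0 then (if k = 0 then 1 else q) else t)
          = (q - 1) * t := by
        rw [Finset.sum_congr rfl (fun b hb => if_neg (Finset.ne_of_mem_erase hb)),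
          Finset.sum_const, Finset.card_erase_of_mem (Finset.mem_univ _),
          Finset.card_univ, hq, smul_eq_mul]
      rw [h2]
      -- arithmetic: (if k = 0 then 1 else q) + (q-1)*t = (q-1)*d + 1
      by_cases hk : k = 0
      · have : t = d := by clear * - hk hd2 hq1; omega
        rw [if_pos hk, this]
        clear * - hq1
        omega
      · have hkk : k = 1 := by clear * - hk hd2 hq1; omega
        have htq' : t = q := by clear * - hk hd2 hq1; omega
        have hdq : d = q + 1 := by clear * - hk hd2 hq1; omega
        rw [if_neg hk, htq', hdq]
        have : (q - 1) * (q + 1) + 1 = (q - 1) * q + ((q - 1) + 1) := by ring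
        clear * - this hq1
        omega
    rw [hM, hpm2']
    -- final arithmetic
    have hgeom := geom_nat' q hq1 n
    have hqn : 1 ≤ q ^ n := Nat.one_le_pow _ _ hq1
    have expand1 : ((q - 1) * d + 1) * q ^ n = (q - 1) * d * q ^ n + q ^ n := by ring
    have expand2 : (q - 1) * (d * q ^ n + ∑ i ∈ Finset.range n, q ^ i)
        = (q - 1) * d * q ^ n + (q ^ n - 1) := by
      rw [Nat.mul_add, hgeom, mul_assoc]
    simp only [Nat.add_sub_cancel]
    clear * - expand1 expand2 hqn
    omega
end

section
/- Let $q$ be a prime power, $m \ge 1$, and $d$ an integer with $1 \le d \le q$. If a homogeneous polynomial $f \in \mathbb{F}_q[x_0, x_1, \dots, x_m]$ of degree $d$ satisfies $f(x) = 0$ for every $x \in \mathbb{F}_q^{m+1}$, then $f = 0$. Consequently, the evaluation map from the space of homogeneous polynomials of degree $d$ in $m+1$ variables over $\mathbb{F}_q$ to $\mathbb{F}_q$-valued functions on $\mathbb{F}_q^{m+1}$ is injective, so the projective Reed-Muller code $\mathrm{PRM}_q(d,m)$ has dimension $\binom{m+d}{d}$. -/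
open MvPolynomial

universe u1 u2

lemma prm_eq_zero_of_eval_eq_zero {F : Type u1} [Field F] [Fintype F] {σ : Type u2} [Fintype σ]
    (p : MvPolynomial σ F) (h : ∀ v : σ → F, eval v p = 0)
    (hp : p ∈ restrictDegree σ F (Fintype.card F - 1)) : p = 0 := by
  classical
  let φ : F →+* ULift.{u2} F := (ULift.ringEquiv.symm : F ≃+* ULift.{u2} F).toRingHom
  have hφinj : Function.Injective φ := (ULift.ringEquiv.symm : F ≃+* ULift.{u2} F).injective
  let e : σ ≃ ULift.{u1} σ := Equiv.ulift.symm
  set p' : MvPolynomial (ULift.{u1} σ) (ULift.{u2} F) := map φ (rename e p) with hp'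
  have h0 : ∀ v : ULift.{u1} σ → ULift.{u2} F, eval v p' = 0 := by
    intro v
    rw [hp', eval_map, eval₂_rename]
    have hcl := eval₂_comp_left φ (RingHom.id F) (fun i => (v (e i)).down) p
    have hev : eval₂ (RingHom.id F) (fun i => (v (e i)).down) p = 0 := h _
    rw [hev, map_zero] at hcl
    have hfun : (φ ∘ fun i => (v (e i)).down) = v ∘ e := by
      funext i
      cases v (e i); rfl
    rw [RingHom.comp_id, hfun] at hcl
    exact hcl.symm
  have hmem : p' ∈ restrictDegree (ULift.{u1} σ) (ULift.{u2} F)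
      (Fintype.card (ULift.{u2} F) - 1) := by
    rw [mem_restrictDegree]
    rw [mem_restrictDegree] at hp
    intro s hs i
    have hco : coeff s (rename e p) ≠ 0 := by
      intro hz
      have : coeff s p' = 0 := by rw [hp', coeff_map, hz, map_zero]
      exact mem_support_iff.1 hs this
    obtain ⟨u, rfl, hu⟩ := coeff_rename_ne_zero _ _ _ hco
    have hi : i = e (e.symm i) := (e.apply_symm_apply i).symm
    rw [hi, Finsupp.mapDomain_apply e.injective, Fintype.card_ulift]
    exact hp u (mem_support_iff.2 hu) (e.symm i)
  have hz : p' = 0 := MvPolynomial.eq_zero_of_eval_eq_zero _ _ p' h0 hmem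
  have hr : rename e p = 0 := map_injective φ hφinj (by rw [← hp', hz, map_zero])
  exact rename_injective e e.injective (by rw [hr, map_zero])

lemma prm_degree_single {σ : Type*} (i : σ) (n : ℕ) :
    (Finsupp.single i n).degree = n := by
  rcases eq_or_ne n 0 with rfl | h
  · simp [Finsupp.degree]
  · exact Finsupp.degree_single i n

lemma prm_eq_single {σ : Type*} {s : σ →₀ ℕ} {i : σ} {q : ℕ}
    (hdeg : s.degree = q) (hsi : s i = q) (hq : q ≠ 0) : s = Finsupp.single i q := by
  classical
  ext j
  rcases eq_or_ne j i with rfl | hj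
  · simp [hsi]
  · rw [Finsupp.single_apply, if_neg fun h => hj h.symm]
    by_contra hsj
    have hi : i ∈ s.support := Finsupp.mem_support_iff.2 (by omega)
    have hjs : j ∈ s.support := Finsupp.mem_support_iff.2 hsj
    have hsub : ({i, j} : Finset σ) ⊆ s.support := by
      intro k hk
      simp only [Finset.mem_insert, Finset.mem_singleton] at hk
      rcases hk with rfl | rfl <;> assumption
    have h2 : ∑ k ∈ ({i, j} : Finset σ), s k ≤ ∑ k ∈ s.support, s k :=
      Finset.sum_le_sum_of_subset hsub
    rw [Finset.sum_pair fun h => hj h.symm] at h2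
    have : s.degree = ∑ k ∈ s.support, s k := rfl
    omega

lemma prm_vanish {F : Type*} [Field F] [Fintype F] {q d : ℕ} {σ : Type*} [Fintype σ]
    (hq : Fintype.card F = q) (hd1 : 1 ≤ d) (hd2 : d ≤ q)
    (f : MvPolynomial σ F) (hf : f.IsHomogeneous d)
    (h0 : ∀ x : σ → F, eval x f = 0) : f = 0 := by
  classical
  have hq2 : 2 ≤ q := hq ▸ Fintype.one_lt_card
  set c : σ → F := fun i => coeff (Finsupp.single i q) f with hc
  set S : MvPolynomial σ F := ∑ i, monomial (Finsupp.single i q) (c i) with hS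
  set L : MvPolynomial σ F := ∑ i, monomial (Finsupp.single i 1) (c i) with hL
  have hqne : q ≠ 0 := by omega
  have hcoeffS : ∀ i, coeff (Finsupp.single i q) S = c i := by
    intro i
    rw [hS, MvPolynomial.coeff_sum, Finset.sum_eq_single i]
    · simp [coeff_monomial]
    · intro j _ hji
      rw [coeff_monomial, if_neg]
      intro h
      exact hji ((Finsupp.single_left_inj hqne).1 h)
    · simp
  have hcoeffL : ∀ i, coeff (Finsupp.single i 1) L = c i := by
    intro i
    rw [hL, MvPolynomial.coeff_sum, Finset.sum_eq_single i]
    · simp [coeff_monomial]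
    · intro j _ hji
      rw [coeff_monomial, if_neg]
      intro h
      exact hji ((Finsupp.single_left_inj one_ne_zero).1 h)
    · simp
  have hSh : S.IsHomogeneous q :=
    IsHomogeneous.sum _ _ _ fun i _ => isHomogeneous_monomial _ (prm_degree_single i q)
  have hLh : L.IsHomogeneous 1 :=
    IsHomogeneous.sum _ _ _ fun i _ => isHomogeneous_monomial _ (prm_degree_single i 1)
  have hSL : ∀ x : σ → F, eval x S = eval x L := by
    intro x
    rw [hS, hL, map_sum, map_sum]
    refine Finset.sum_congr rfl fun i _ => ?_
    rw [← C_mul_X_pow_eq_monomial, ← C_mul_X_pow_eq_monomial]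
    simp only [map_mul, map_pow, eval_C, eval_X, pow_one]
    rw [← hq, FiniteField.pow_card]
  set g : MvPolynomial σ F := (f - S) + L with hg
  have hgz : ∀ x : σ → F, eval x g = 0 := by
    intro x
    rw [hg, map_add, map_sub, h0 x, hSL x]
    ring
  have hcz : d ≠ q → ∀ i, c i = 0 := fun hne i =>
    hf.coeff_eq_zero (by rw [prm_degree_single]; omega)
  have hgmem : g ∈ restrictDegree σ F (q - 1) := by
    rw [mem_restrictDegree]
    intro s hs i
    rcases Finset.mem_union.1 (MvPolynomial.support_add hs) with hs' | hs'
    · have hcoeffne : coeff s (f - S) ≠ 0 := mem_support_iff.1 hs'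
      by_cases hdq : d = q
      · subst hdq
        have hFS : (f - S).IsHomogeneous d := hf.sub hSh
        have hdeg : s.degree = d := by
          by_contra h
          exact hcoeffne (hFS.coeff_eq_zero h)
        have hsi : s i ≤ d := hdeg ▸ Finsupp.le_degree i s
        rcases eq_or_ne (s i) d with he | hne
        · exfalso
          have hss : s = Finsupp.single i d := prm_eq_single hdeg he hqne
          apply hcoeffne
          rw [hss, MvPolynomial.coeff_sub, hcoeffS i, hc, sub_self]
        · omega
      · have hS0 : S = 0 := by
          rw [hS]
          exact Finset.sum_eq_zero fun i _ => by rw [hcz hdq i, map_zero]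
        rw [hS0, sub_zero] at hcoeffne
        have hdeg : s.degree = d := by
          by_contra h
          exact hcoeffne (hf.coeff_eq_zero h)
        have hsi : s i ≤ d := hdeg ▸ Finsupp.le_degree i s
        omega
    · have := MvPolynomial.support_sum hs'
      rw [Finset.mem_biUnion] at this
      obtain ⟨j, -, hj⟩ := this
      have hsub := MvPolynomial.support_monomial_subset hj
      rw [Finset.mem_singleton] at hsub
      subst hsub
      rcases eq_or_ne i j with rfl | hij
      · simp only [Finsupp.single_eq_same]; omega
      · rw [Finsupp.single_eq_of_ne' (Ne.symm hij)]; omega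
  have hg0 : g = 0 := by
    refine prm_eq_zero_of_eval_eq_zero g hgz ?_
    rwa [hq]
  by_cases hdq : d = q
  · subst hdq
    have hFS : (f - S).IsHomogeneous d := hf.sub hSh
    have hFSL : f - S = -L := by
      have := hg0
      rw [hg] at this
      linear_combination this
    by_cases hfs : f - S = 0
    · have hL0 : L = 0 := by
        have := hFSL
        rw [hfs] at this
        simpa using this.symm
      have hci : ∀ i, c i = 0 := by
        intro i
        rw [← hcoeffL i, hL0, coeff_zero]
      have hS0 : S = 0 := by
        rw [hS]
        exact Finset.sum_eq_zero fun i _ => by rw [hci i, map_zero]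
      rw [sub_eq_zero] at hfs
      rw [hfs, hS0]
    · exfalso
      have h1 : (f - S).IsHomogeneous 1 := hFSL ▸ hLh.neg
      have := hFS.inj_right h1 hfs
      omega
  · have hS0 : S = 0 := by
      rw [hS]
      exact Finset.sum_eq_zero fun i _ => by rw [hcz hdq i, map_zero]
    have hL0 : L = 0 := by
      rw [hL]
      exact Finset.sum_eq_zero fun i _ => by rw [hcz hdq i, map_zero]
    have := hg0
    rw [hg, hS0, hL0] at this
    simpa using this

lemma prm_degree_eq_sum_id {σ : Type*} (u : σ →₀ ℕ) :
    u.degree = u.sum fun _ ↦ id := rfl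

/-- For `1 ≤ d ≤ q`, a homogeneous polynomial of degree `d` in `m + 1` variables
over `𝔽_q` vanishing at every point of `𝔽_q^{m+1}` is the zero polynomial; hence
the evaluation map from homogeneous polynomials of degree `d` to `𝔽_q`-valued
functions on `𝔽_q^{m+1}` is injective, and the projective Reed–Muller code
`PRM_q(d, m)` (the image of this evaluation map) has dimension `(m + d).choose d`. -/
theorem stmt_4 (F : Type*) [Field F] [Fintype F] (q m d : ℕ)
    (hq : Fintype.card F = q) (hm : 1 ≤ m) (hd1 : 1 ≤ d) (hd2 : d ≤ q) :
    (∀ f : MvPolynomial (Fin (m + 1)) F, f.IsHomogeneous d →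
      (∀ x : Fin (m + 1) → F, eval x f = 0) → f = 0) ∧
    Function.Injective
      ((LinearMap.pi fun x : Fin (m + 1) → F => (aeval x).toLinearMap) ∘ₗ
        (homogeneousSubmodule (Fin (m + 1)) F d).subtype) ∧
    Module.finrank F (LinearMap.range
      ((LinearMap.pi fun x : Fin (m + 1) → F => (aeval x).toLinearMap) ∘ₗ
        (homogeneousSubmodule (Fin (m + 1)) F d).subtype)) = (m + d).choose d := by
  classical
  have key : ∀ f : MvPolynomial (Fin (m + 1)) F, f.IsHomogeneous d →
      (∀ x : Fin (m + 1) → F, eval x f = 0) → f = 0 :=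
    fun f hf h0 => prm_vanish hq hd1 hd2 f hf h0
  set Φ := (LinearMap.pi fun x : Fin (m + 1) → F => (aeval x).toLinearMap) ∘ₗ
        (homogeneousSubmodule (Fin (m + 1)) F d).subtype with hΦ
  have hinj : Function.Injective Φ := by
    rw [← LinearMap.ker_eq_bot, Submodule.eq_bot_iff]
    intro a ha
    rw [LinearMap.mem_ker] at ha
    have h0 : ∀ x : Fin (m + 1) → F, eval x (a : MvPolynomial (Fin (m + 1)) F) = 0 := by
      intro x
      have := congrFun ha x
      simpa [hΦ] using this
    exact Subtype.ext (key a.1 a.2 h0)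
  refine ⟨key, hinj, ?_⟩
  have e1 : (LinearMap.range Φ) ≃ₗ[F] homogeneousSubmodule (Fin (m + 1)) F d :=
    (LinearEquiv.ofInjective Φ hinj).symm
  rw [e1.finrank_eq]
  have hsub := homogeneousSubmodule_eq_finsupp_supported (Fin (m + 1)) F d
  have e2 : (homogeneousSubmodule (Fin (m + 1)) F d) ≃ₗ[F]
      AddMonoidAlgebra.supported F F {u : (Fin (m + 1)) →₀ ℕ | u.degree = d} :=
    LinearEquiv.ofEq _ _ hsub
  have e3 := AddMonoidAlgebra.supportedEquivFinsupp (S := F) (R := F)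
    {u : (Fin (m + 1)) →₀ ℕ | u.degree = d}
  have eSym : ↥{u : (Fin (m + 1)) →₀ ℕ | u.degree = d} ≃ Sym (Fin (m + 1)) d := by
    refine (Equiv.subtypeEquivRight fun u => ?_).trans (Sym.equivNatSum (Fin (m + 1)) d).symm
    simp only [Set.mem_setOf_eq, prm_degree_eq_sum_id]
  haveI : Fintype ↥{u : (Fin (m + 1)) →₀ ℕ | u.degree = d} :=
    Fintype.ofEquiv _ eSym.symm
  rw [e2.finrank_eq, e3.finrank_eq, Module.finrank_finsupp_self]
  rw [Fintype.card_congr eSym, Sym.card_sym_eq_choose, Fintype.card_fin]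
  congr 1
  omega
end
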